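/- Let G = (V,E) be a directed mixed graph, O ⊆ V, and M = m(G,O) the latent projection of G on O. Then for all A, B, C ⊆ O: B is μ-separated from A given C in G if and only if B is μ-separated from A given C in M. -/

import Mathlib

/-!
Directed mixed graphs (DMGs) with μ-separation, following
Mogensen & Hansen, "Markov equivalence of marginalized local independence graphs".
-/

universe u

/-- A directed mixed graph on node set `V`: a set of directed edges (`dir a b`
meaning `a → b`) and a set of bidirected edges (`bi`, a symmetric relation since
bidirected edges are unordered pairs).  Loops are allowed. -/
structure DMG (V : Type u) where
  dir : V → V → Prop
  bi : V → V → Prop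
  bi_symm : ∀ a b, bi a b → bi b a

namespace DMG

variable {V : Type u}

/-- A single step of a walk: an edge instance together with the direction in
which it is traversed (this records, in particular, orientations of loops).
A directed edge has a tail at its source and a head at its target; a bidirected
edge has heads at both endpoints. -/
inductive Step (G : DMG V) : V → V → Type u
  | dirF : ∀ {a b : V}, G.dir a b → Step G a b
  | dirB : ∀ {a b : V}, G.dir b a → Step G a b
  | bid  : ∀ {a b : V}, G.bi a b → Step G a b

/-- Whether the step has a head (edge mark) at its start node. -/
def Step.headStart {G : DMG V} : ∀ {a b : V}, Step G a b → Bool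
  | _, _, .dirF _ => false
  | _, _, .dirB _ => true
  | _, _, .bid _ => true

/-- Whether the step has a head (edge mark) at its end node. -/
def Step.headEnd {G : DMG V} : ∀ {a b : V}, Step G a b → Bool
  | _, _, .dirF _ => true
  | _, _, .dirB _ => false
  | _, _, .bid _ => true

/-- The step traverses a bidirected edge. -/
def Step.IsBid {G : DMG V} {a b : V} : Step G a b → Prop
  | .bid _ => True
  | _ => False

/-- The step traverses a directed edge, forwards. -/
def Step.IsDirF {G : DMG V} {a b : V} : Step G a b → Prop
  | .dirF _ => True
  | _ => False

/-- The underlying edge of a step: a directed edge is the ordered pair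
(tail, head); a bidirected edge is the unordered pair of its endpoints. -/
def Step.edge {G : DMG V} : ∀ {a b : V}, Step G a b → (V × V) ⊕ (Sym2 V)
  | a, b, .dirF _ => Sum.inl (a, b)
  | a, b, .dirB _ => Sum.inl (b, a)
  | a, b, .bid _ => Sum.inr s(a, b)

/-- A walk in a DMG: an alternating sequence of nodes and edges, each edge
between its neighbouring nodes, with a chosen orientation of each edge
(in particular of each directed loop). -/
inductive Walk (G : DMG V) : V → V → Type u
  | nil (a : V) : Walk G a a
  | cons {a b c : V} (s : Step G a b) (w : Walk G b c) : Walk G a c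

namespace Walk

variable {G : DMG V}

/-- A nontrivial walk contains at least one edge. -/
def Nontrivial : ∀ {a b : V}, Walk G a b → Prop
  | _, _, .nil _ => False
  | _, _, .cons _ _ => True

/-- The list of nodes of a walk, in order (with multiplicity). -/
def nodes : ∀ {a b : V}, Walk G a b → List V
  | a, _, .nil _ => [a]
  | a, _, .cons _ w => a :: w.nodes

/-- The non-endpoint (internal) nodes of a walk, in order (with multiplicity). -/
def interior {a b : V} (w : Walk G a b) : List V :=
  (w.nodes.dropLast).drop 1

/-- The list of edges of a walk. -/
def edges : ∀ {a b : V}, Walk G a b → List ((V × V) ⊕ (Sym2 V))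
  | _, _, .nil _ => []
  | _, _, .cons s w => s.edge :: w.edges

/-- Whether the first edge of the walk has a head at the first node
(`false` for a trivial walk). -/
def firstHead : ∀ {a b : V}, Walk G a b → Bool
  | _, _, .nil _ => false
  | _, _, .cons s _ => s.headStart

/-- Whether the last edge of the walk has a head at the last node
(`false` for a trivial walk). -/
def lastHead : ∀ {a b : V}, Walk G a b → Bool
  | _, _, .nil _ => false
  | _, _, .cons s (.nil _) => s.headEnd
  | _, _, .cons _ (.cons t w) => lastHead (Walk.cons t w)

/-- Helper: conditions at all remaining internal node instances of a walk,
where `h` records whether the edge arriving at the current start node has a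
head there.  A node instance is a collider if both adjoining edges have a
head at it; a collider must lie in `Anc`, a noncollider must avoid `C`. -/
def openFrom (C Anc : Set V) : ∀ {a b : V}, Bool → Walk G a b → Prop
  | _, _, _, .nil _ => True
  | a, _, h, .cons s w =>
      (if h && s.headStart then a ∈ Anc else a ∉ C) ∧ openFrom C Anc s.headEnd w

/-- Helper: every remaining internal node instance which is a collider lies in `S`. -/
def collInFrom (S : Set V) : ∀ {a b : V}, Bool → Walk G a b → Prop
  | _, _, _, .nil _ => True
  | a, _, h, .cons s w =>
      ((h && s.headStart) = true → a ∈ S) ∧ collInFrom S s.headEnd w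

/-- Every collider (internal node instance with heads on both sides) of the
walk lies in `S`. -/
def CollidersIn (S : Set V) : ∀ {a b : V}, Walk G a b → Prop
  | _, _, .nil _ => True
  | _, _, .cons s w => collInFrom S s.headEnd w

/-- The walk has no colliders. -/
def NoColliders {a b : V} (w : Walk G a b) : Prop :=
  w.CollidersIn ∅

/-- Helper: every remaining internal node instance is a collider. -/
def allCollFrom : ∀ {a b : V}, Bool → Walk G a b → Prop
  | _, _, _, .nil _ => True
  | _, _, h, .cons s w => (h && s.headStart) = true ∧ allCollFrom s.headEnd w

/-- Every internal node instance of the walk is a collider (no noncolliders). -/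
def AllColliders : ∀ {a b : V}, Walk G a b → Prop
  | _, _, .nil _ => True
  | _, _, .cons s w => allCollFrom s.headEnd w

/-- Every edge of the walk is bidirected. -/
def AllBid : ∀ {a b : V}, Walk G a b → Prop
  | _, _, .nil _ => True
  | _, _, .cons s w => s.IsBid ∧ w.AllBid

/-- The walk consists of a directed first edge (pointing forwards) followed by
bidirected edges only (the form `α → β` or `α → γ₁ ↔ ⋯ ↔ γₙ ↔ β`). -/
def UniForm : ∀ {a b : V}, Walk G a b → Prop
  | _, _, .nil _ => False
  | _, _, .cons s w => s.IsDirF ∧ w.AllBid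

end Walk

/-- `a` is an ancestor of `b`: there is a (possibly trivial) directed path
from `a` to `b`. -/
def anc (G : DMG V) (a b : V) : Prop := Relation.ReflTransGen G.dir a b

/-- The set of ancestors of nodes of `C`. -/
def anSet (G : DMG V) (C : Set V) : Set V := {a | ∃ c ∈ C, G.anc a c}

/-- The walk is μ-connecting given `C`: it is nontrivial, its first node is not
in `C`, every collider lies in `An(C)`, no noncollider lies in `C`, and its
final edge has a head at the final node. -/
def Walk.MuConn {G : DMG V} (C : Set V) : ∀ {a b : V}, Walk G a b → Prop
  | _, _, .nil _ => False
  | a, _, .cons s w =>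
      a ∉ C ∧ Walk.openFrom C (G.anSet C) s.headEnd w ∧ (Walk.cons s w).lastHead = true

/-- `B` is μ-separated from `A` given `C` in `G`: there is no μ-connecting
walk from any node of `A` to any node of `B` given `C`. -/
def muSep (G : DMG V) (A B C : Set V) : Prop :=
  ∀ ⦃a b : V⦄, a ∈ A → b ∈ B → ∀ w : Walk G a b, ¬ w.MuConn C

/-- Two DMGs on the same node set are Markov equivalent: they induce the same
independence model via μ-separation, i.e. `I(G₁) = I(G₂)`. -/
def MarkovEq (G₁ G₂ : DMG V) : Prop :=
  ∀ A B C : Set V, muSep G₁ A B C ↔ muSep G₂ A B C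

/-- `b` is separable from `a` in `I(G)`: there is `C ⊆ V ∖ {a}` with
`⟨{a},{b} | C⟩ ∈ I(G)`. -/
def separable (G : DMG V) (a b : V) : Prop :=
  ∃ C : Set V, a ∉ C ∧ muSep G {a} {b} C

/-- `a ∈ u(b, I(G))`: `b` is inseparable from `a` in `I(G)`. -/
def inU (G : DMG V) (a b : V) : Prop := ¬ G.separable a b

/-- `G₁` is a subgraph of `G₂` (same node set, edge-set inclusion). -/
def Sub (G₁ G₂ : DMG V) : Prop :=
  (∀ a b, G₁.dir a b → G₂.dir a b) ∧ (∀ a b, G₁.bi a b → G₂.bi a b)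

/-- The DMG obtained by adding the directed edge `a → b`. -/
def addDir (G : DMG V) (a b : V) : DMG V where
  dir x y := G.dir x y ∨ (x = a ∧ y = b)
  bi := G.bi
  bi_symm := G.bi_symm

/-- The DMG obtained by adding the bidirected edge `a ↔ b`. -/
def addBi (G : DMG V) (a b : V) : DMG V where
  dir := G.dir
  bi x y := G.bi x y ∨ (x = a ∧ y = b) ∨ (x = b ∧ y = a)
  bi_symm x y h := by
    rcases h with h | h | h
    · exact Or.inl (G.bi_symm _ _ h)
    · exact Or.inr (Or.inr ⟨h.2, h.1⟩)
    · exact Or.inr (Or.inl ⟨h.2, h.1⟩)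

/-- The DMG obtained by removing the directed edge `a → b`. -/
def removeDir (G : DMG V) (a b : V) : DMG V where
  dir x y := G.dir x y ∧ ¬(x = a ∧ y = b)
  bi := G.bi
  bi_symm := G.bi_symm

/-- The DMG obtained by removing the bidirected edge `a ↔ b`. -/
def removeBi (G : DMG V) (a b : V) : DMG V where
  dir := G.dir
  bi x y := G.bi x y ∧ ¬((x = a ∧ y = b) ∨ (x = b ∧ y = a))
  bi_symm x y h := ⟨G.bi_symm _ _ h.1, fun hc => h.2 (by tauto)⟩

/-- The complete DMG: all directed and all bidirected edges present. -/
def IsComplete (G : DMG V) : Prop :=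
  (∀ a b, G.dir a b) ∧ (∀ a b, G.bi a b)

/-- A DMG is maximal if it is complete, or adding any (absent) edge changes the
induced independence model. -/
def IsMaximal (G : DMG V) : Prop :=
  G.IsComplete ∨
    ∀ a b : V, (¬ G.dir a b → ¬ MarkovEq (G.addDir a b) G) ∧
      (¬ G.bi a b → ¬ MarkovEq (G.addBi a b) G)

end DMG
namespace DMG

variable {V : Type u}

/-- An inducing path from `a` to `b`: a nontrivial path or cycle from `a` to
`b` with a head at `b`, with no noncolliders, and on which every node is an
ancestor of `a` or of `b`. -/
def IsInducingPath (G : DMG V) {a b : V} (w : Walk G a b) : Prop :=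
  w.Nontrivial ∧
  (w.nodes.Nodup ∨ (a = b ∧ w.nodes.dropLast.Nodup)) ∧
  w.lastHead = true ∧
  w.AllColliders ∧
  ∀ x ∈ w.nodes, G.anc x a ∨ G.anc x b

/-- A bidirected inducing path: an inducing path all of whose edges are bidirected. -/
def IsBidirectedIP (G : DMG V) {a b : V} (w : Walk G a b) : Prop :=
  G.IsInducingPath w ∧ w.AllBid

/-- A directed inducing path: an inducing path of the form `α → β` or
`α → γ₁ ↔ ⋯ ↔ γₙ ↔ β` with every `γᵢ` an ancestor of `β`. -/
def IsDirectedIP (G : DMG V) {a b : V} (w : Walk G a b) : Prop :=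
  G.IsInducingPath w ∧ w.UniForm ∧ ∀ x ∈ w.interior, G.anc x b

/-- There exists a nontrivial walk in `G` between `x` and `y` with no
colliders, all non-endpoint nodes in `M`, and with edge marks `hs` at `x`
(`true` = head) and `he` at `y`. -/
def ConnThrough (G : DMG V) (M : Set V) (x y : V) (hs he : Bool) : Prop :=
  ∃ w : Walk G x y, w.Nontrivial ∧ w.NoColliders ∧
    (∀ z ∈ w.interior, z ∈ M) ∧ w.firstHead = hs ∧ w.lastHead = he

/-- The latent projection `m(G, O)` of `G` on `O`: the DMG on node set `O`
having an edge (with given endpoint marks) between `α` and `β` if and only if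
`G` contains a nontrivial endpoint-identical walk between `α` and `β` with no
colliders and all non-endpoint nodes in `M = V ∖ O`. -/
def latentProj (G : DMG V) (O : Set V) : DMG {x : V // x ∈ O} where
  dir x y := ConnThrough G Oᶜ x.1 y.1 false true
  bi x y := ConnThrough G Oᶜ x.1 y.1 true true ∨ ConnThrough G Oᶜ y.1 x.1 true true
  bi_symm x y h := h.symm

/-- `x` is directedly collider-connected to `b`: there is a nontrivial walk
from `x` to `b` with a head at `b` on which every non-endpoint node is a
collider. -/
def dirCollConn (G : DMG V) (x b : V) : Prop :=
  ∃ w : Walk G x b, w.Nontrivial ∧ w.AllColliders ∧ w.lastHead = true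

/-- The set `D(a,b)` of nodes in `An({a,b})` directedly collider-connected to
`b`, except `a`. -/
def Dset (G : DMG V) (a b : V) : Set V :=
  {x | x ∈ G.anSet {a, b} ∧ G.dirCollConn x b} \ {a}

/-- `a` and `b` are potential siblings in the independence model `I(G)`. -/
def PotSib (G : DMG V) (a b : V) : Prop :=
  (G.inU b a ∧ G.inU a b) ∧
  (∀ (γ : V) (C : Set V), b ∈ C → muSep G {γ} {a} C → muSep G {γ} {b} C) ∧
  (∀ (γ : V) (C : Set V), a ∈ C → muSep G {γ} {b} C → muSep G {γ} {a} C)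

/-- `a` is a potential parent of `b` in the independence model `I(G)`. -/
def PotPar (G : DMG V) (a b : V) : Prop :=
  G.inU a b ∧
  (∀ (γ : V) (C : Set V), a ∉ C → muSep G {γ} {b} C → muSep G {γ} {a} C) ∧
  (∀ (γ δ : V) (C : Set V), a ∉ C → b ∈ C →
    muSep G {γ} {δ} C → muSep G {γ} {b} C ∨ muSep G {a} {δ} C) ∧
  (∀ (γ : V) (C : Set V), a ∉ C → muSep G {b} {γ} C → muSep G {b} {γ} (C ∪ {a}))

/-- The graph `N(I(G))`: directed edge `a → b` present iff `a` is a potential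
parent of `b` in `I(G)`, bidirected edge `a ↔ b` present iff `a` and `b` are
potential siblings in `I(G)` (potential siblinghood is symmetric). -/
def NGraph (G : DMG V) : DMG V where
  dir a b := G.PotPar a b
  bi a b := G.PotSib a b ∨ G.PotSib b a
  bi_symm _ _ h := h.symm

/-- A path is m-connecting given `C` if it is a path (no repeated nodes), no
noncollider on it is in `C` and every collider on it is in `An(C)`. -/
def Walk.MConn {G : DMG V} (C : Set V) : ∀ {a b : V}, Walk G a b → Prop
  | _, _, .nil _ => True
  | _, _, .cons s w =>
      (Walk.cons s w).nodes.Nodup ∧ Walk.openFrom C (G.anSet C) s.headEnd w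

/-- `A` and `B` are m-separated by `C`: there is no m-connecting path between
a node of `A` and a node of `B` given `C`. -/
def mSep (G : DMG V) (A B C : Set V) : Prop :=
  ∀ ⦃a b : V⦄, a ∈ A → b ∈ B →
    (∀ w : Walk G a b, ¬ w.MConn C) ∧ (∀ w : Walk G b a, ¬ w.MConn C)

/-- Auxiliary directed-edge relation of the `B`-history version of `G`. -/
def histDir (G : DMG V) (B : Set V) : (V ⊕ {x : V // x ∈ B}) → (V ⊕ {x : V // x ∈ B}) → Prop
  | .inl u, .inl v => G.dir u v
  | .inl u, .inr v => G.dir u v.1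
  | _, _ => False

/-- Auxiliary bidirected-edge relation of the `B`-history version of `G`. -/
def histBi (G : DMG V) (B : Set V) : (V ⊕ {x : V // x ∈ B}) → (V ⊕ {x : V // x ∈ B}) → Prop
  | .inl u, .inl v => G.bi u v
  | .inl u, .inr v => G.bi u v.1
  | .inr u, .inl v => G.bi u.1 v
  | .inr _, .inr _ => False

/-- The `B`-history version `G(B)` of `G`: node set `V ⊔ Bᵖ`, whose subgraph
on `V` is `G`, with additionally `α ↔ βᵖ` whenever `α ↔ β` in `G` and
`α → βᵖ` whenever `α → β` in `G` (for `α ∈ V`, `β ∈ B`). -/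
def hist (G : DMG V) (B : Set V) : DMG (V ⊕ {x : V // x ∈ B}) where
  dir := G.histDir B
  bi := G.histBi B
  bi_symm x y h := by
    cases x <;> cases y <;>
      simp only [histBi] at h ⊢ <;>
      first
        | exact G.bi_symm _ _ h
        | exact h

end DMG

/-! ### Auxiliary development for the proof of Theorem 1 -/

namespace DMG

variable {V : Type u} {G : DMG V}

namespace Step

/-- Reversal of a step. -/
def symm : ∀ {a b : V}, Step G a b → Step G b a
  | _, _, .dirF h => .dirB h
  | _, _, .dirB h => .dirF h
  | _, _, .bid h => .bid (G.bi_symm _ _ h)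

@[simp] lemma headStart_symm : ∀ {a b : V} (s : Step G a b), s.symm.headStart = s.headEnd
  | _, _, .dirF _ => rfl
  | _, _, .dirB _ => rfl
  | _, _, .bid _ => rfl

@[simp] lemma headEnd_symm : ∀ {a b : V} (s : Step G a b), s.symm.headEnd = s.headStart
  | _, _, .dirF _ => rfl
  | _, _, .dirB _ => rfl
  | _, _, .bid _ => rfl

lemma isDirF_elim : ∀ {a b : V} (s : Step G a b), s.IsDirF →
    G.dir a b ∧ s.headStart = false ∧ s.headEnd = true
  | _, _, .dirF h, _ => ⟨h, rfl, rfl⟩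

lemma isDirF_of_headStart_false : ∀ {a b : V} (s : Step G a b), s.headStart = false → s.IsDirF
  | _, _, .dirF _, _ => trivial

end Step

namespace Walk

/-- Concatenation of walks. -/
def append : ∀ {a b c : V}, Walk G a b → Walk G b c → Walk G a c
  | _, _, _, .nil _, w₂ => w₂
  | _, _, _, .cons s w, w₂ => .cons s (append w w₂)

@[simp] lemma nil_append {a c : V} (w : Walk G a c) : (Walk.nil a).append w = w := rfl

@[simp] lemma cons_append {a b b' c : V} (s : Step G a b) (w : Walk G b b') (w₂ : Walk G b' c) :
    (Walk.cons s w).append w₂ = .cons s (w.append w₂) := rfl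

/-- The edge-mark state when leaving the walk at its final node, given the
entering state `h` (equals `lastHead` for nontrivial walks). -/
def exitHead : ∀ {a b : V}, Bool → Walk G a b → Bool
  | _, _, h, .nil _ => h
  | _, _, _, .cons s w => exitHead s.headEnd w

@[simp] lemma exitHead_nil {a : V} (h : Bool) : exitHead h (Walk.nil a : Walk G a a) = h := rfl

@[simp] lemma exitHead_cons {a b c : V} (h : Bool) (s : Step G a b) (w : Walk G b c) :
    exitHead h (Walk.cons s w) = exitHead s.headEnd w := rfl

lemma exitHead_append : ∀ {a b c : V} (w₁ : Walk G a b) (w₂ : Walk G b c) (h : Bool),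
    exitHead h (w₁.append w₂) = exitHead (exitHead h w₁) w₂
  | _, _, _, .nil _, _, _ => rfl
  | _, _, _, .cons s w, w₂, _ => exitHead_append w w₂ s.headEnd

lemma lastHead_eq_exitHead : ∀ {a b : V} (w : Walk G a b), w.Nontrivial →
    ∀ h : Bool, w.lastHead = exitHead h w
  | _, _, .cons _ (.nil _), _, _ => rfl
  | _, _, .cons s (.cons t w), _, h => lastHead_eq_exitHead (.cons t w) trivial s.headEnd

/-- All nodes of a walk except the last one. -/
def inner : ∀ {a b : V}, Walk G a b → List V
  | _, _, .nil _ => []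
  | a, _, .cons _ w => a :: inner w

lemma nodes_ne_nil : ∀ {a b : V} (w : Walk G a b), w.nodes ≠ []
  | _, _, .nil _ => by simp [nodes]
  | _, _, .cons _ _ => by simp [nodes]

lemma dropLast_nodes : ∀ {a b : V} (w : Walk G a b), w.nodes.dropLast = w.inner
  | _, _, .nil _ => rfl
  | _, _, .cons s w => by
      show (_ :: w.nodes).dropLast = _ :: w.inner
      rw [List.dropLast_cons_of_ne_nil (nodes_ne_nil w), dropLast_nodes w]

@[simp] lemma interior_nil {a : V} : (Walk.nil a : Walk G a a).interior = [] := rfl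

lemma interior_cons {a b c : V} (s : Step G a b) (w : Walk G b c) :
    (Walk.cons s w).interior = w.inner := by
  show ((Walk.cons s w).nodes.dropLast).drop 1 = w.inner
  rw [dropLast_nodes]
  rfl

lemma inner_append : ∀ {a b c : V} (w₁ : Walk G a b) (w₂ : Walk G b c),
    (w₁.append w₂).inner = w₁.inner ++ w₂.inner
  | _, _, _, .nil _, _ => rfl
  | _, _, _, .cons s w, w₂ => by
      show _ :: (w.append w₂).inner = _
      rw [inner_append w w₂]
      rfl

lemma nontrivial_append_left : ∀ {a b c : V} (w₁ : Walk G a b) (w₂ : Walk G b c),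
    w₁.Nontrivial → (w₁.append w₂).Nontrivial
  | _, _, _, .cons _ _, _, _ => trivial

lemma nontrivial_append_right : ∀ {a b c : V} (w₁ : Walk G a b) (w₂ : Walk G b c),
    w₂.Nontrivial → (w₁.append w₂).Nontrivial
  | _, _, _, .nil _, _, h => h
  | _, _, _, .cons _ _, _, _ => trivial

lemma firstHead_cons {a b c : V} (s : Step G a b) (w : Walk G b c) :
    (Walk.cons s w).firstHead = s.headStart := rfl

lemma mem_interior_append {a b c : V} (w₁ : Walk G a b) (w₂ : Walk G b c) :
    ∀ z ∈ (w₁.append w₂).interior,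
      z ∈ w₁.interior ∨ (w₁.Nontrivial ∧ z = b) ∨ z ∈ w₂.interior := by
  cases w₁ with
  | nil => exact fun z hz => Or.inr (Or.inr hz)
  | cons s w₁' =>
    cases w₂ with
    | nil =>
      intro z hz
      rw [cons_append, interior_cons, inner_append] at hz
      rw [interior_cons]
      exact Or.inl (by simpa [inner] using hz)
    | cons t w₂' =>
      intro z hz
      rw [cons_append, interior_cons, inner_append] at hz
      rcases List.mem_append.1 hz with hz | hz
      · exact Or.inl (by rwa [interior_cons])
      · rcases List.mem_cons.1 hz with hz | hz
        · exact Or.inr (Or.inl ⟨trivial, hz⟩)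
        · exact Or.inr (Or.inr (by rwa [interior_cons]))

lemma openFrom_append (C Anc : Set V) :
    ∀ {a b c : V} (w₁ : Walk G a b) (w₂ : Walk G b c) (h : Bool),
    openFrom C Anc h (w₁.append w₂) ↔
      openFrom C Anc h w₁ ∧ openFrom C Anc (exitHead h w₁) w₂
  | _, _, _, .nil _, w₂, h => by simp [openFrom]
  | _, _, _, .cons s w, w₂, h => by
      rw [cons_append]
      show (_ ∧ openFrom C Anc s.headEnd (w.append w₂)) ↔ _
      rw [openFrom_append C Anc w w₂ s.headEnd]
      show _ ↔ ((_ ∧ _) ∧ _)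
      rw [exitHead_cons]
      tauto

lemma collInFrom_append (S : Set V) :
    ∀ {a b c : V} (w₁ : Walk G a b) (w₂ : Walk G b c) (h : Bool),
    collInFrom S h (w₁.append w₂) ↔
      collInFrom S h w₁ ∧ collInFrom S (exitHead h w₁) w₂
  | _, _, _, .nil _, w₂, h => by simp [collInFrom]
  | _, _, _, .cons s w, w₂, h => by
      rw [cons_append]
      show (_ ∧ collInFrom S s.headEnd (w.append w₂)) ↔ _
      rw [collInFrom_append S w w₂ s.headEnd]
      show _ ↔ ((_ ∧ _) ∧ _)
      rw [exitHead_cons]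
      tauto

lemma collidersIn_cons {a b c : V} (S : Set V) (s : Step G a b) (w : Walk G b c) :
    CollidersIn S (Walk.cons s w) = collInFrom S s.headEnd w := rfl

lemma noColliders_cons {a b c : V} (s : Step G a b) (w : Walk G b c) :
    NoColliders (Walk.cons s w) = collInFrom ∅ s.headEnd w := rfl

lemma collidersIn_cons_append {a b b' c : V} (S : Set V) (s : Step G a b)
    (w₁ : Walk G b b') (w₂ : Walk G b' c) :
    CollidersIn S ((Walk.cons s w₁).append w₂) ↔
      CollidersIn S (Walk.cons s w₁) ∧ collInFrom S (exitHead s.headEnd w₁) w₂ := by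
  rw [cons_append, collidersIn_cons, collidersIn_cons, collInFrom_append]

/-- If the walk and the entry state have no colliders and all nodes except the
last avoid `C`, then the open-ness conditions hold. -/
lemma openFrom_of_inner (C Anc : Set V) :
    ∀ {a b : V} (w : Walk G a b) (h : Bool), collInFrom ∅ h w →
      (∀ z ∈ w.inner, z ∉ C) → openFrom C Anc h w
  | _, _, .nil _, _, _, _ => trivial
  | _, _, .cons s w, h, hc, hz => by
      obtain ⟨h1, h2⟩ := hc
      refine ⟨?_, openFrom_of_inner C Anc w s.headEnd h2
        fun z hzz => hz z (List.mem_cons_of_mem _ hzz)⟩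
      rw [if_neg fun hh => (h1 hh).elim]
      exact hz _ List.mem_cons_self

lemma openFrom_seg (C Anc : Set V) {a b : V} (w : Walk G a b) (h : Bool)
    (hnc : w.NoColliders) (hint : ∀ z ∈ w.interior, z ∉ C)
    (hstart : if h && w.firstHead then a ∈ Anc else a ∉ C) : openFrom C Anc h w := by
  cases w with
  | nil => trivial
  | cons s w =>
      exact ⟨hstart, openFrom_of_inner C Anc w s.headEnd hnc
        (by rwa [interior_cons] at hint)⟩

/-- Every step of the walk is a forward directed edge. -/
def AllDirF : ∀ {a b : V}, Walk G a b → Prop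
  | _, _, .nil _ => True
  | _, _, .cons s w => s.IsDirF ∧ AllDirF w

lemma allDirF_append : ∀ {a b c : V} (w₁ : Walk G a b) (w₂ : Walk G b c),
    AllDirF w₁ → AllDirF w₂ → AllDirF (w₁.append w₂)
  | _, _, _, .nil _, _, _, h₂ => h₂
  | _, _, _, .cons _ w, w₂, h₁, h₂ => ⟨h₁.1, allDirF_append w w₂ h₁.2 h₂⟩

lemma exitHead_allDirF : ∀ {a b : V} (w : Walk G a b), AllDirF w → exitHead true w = true
  | _, _, .nil _, _ => rfl
  | _, _, .cons s w, h => by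
      rw [exitHead_cons, (s.isDirF_elim h.1).2.2]
      exact exitHead_allDirF w h.2

lemma collInFrom_allDirF : ∀ {a b : V} (w : Walk G a b) (h : Bool), AllDirF w →
    collInFrom (∅ : Set V) h w
  | _, _, .nil _, _, _ => trivial
  | _, _, .cons s w, h, hd => by
      refine ⟨fun hh => ?_, collInFrom_allDirF w s.headEnd hd.2⟩
      rw [(s.isDirF_elim hd.1).2.1, Bool.and_false] at hh
      exact absurd hh (by simp)

lemma noColliders_allDirF {a b : V} (w : Walk G a b) (h : AllDirF w) : w.NoColliders := by
  cases w with
  | nil => trivial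
  | cons s w => exact collInFrom_allDirF w s.headEnd h.2

lemma firstHead_allDirF {a b : V} (w : Walk G a b) (hnt : w.Nontrivial) (h : AllDirF w) :
    w.firstHead = false := by
  cases w with
  | nil => exact hnt.elim
  | cons s w => exact (s.isDirF_elim h.1).2.1

lemma lastHead_allDirF {a b : V} (w : Walk G a b) (hnt : w.Nontrivial) (h : AllDirF w) :
    w.lastHead = true := by
  rw [lastHead_eq_exitHead w hnt true]
  exact exitHead_allDirF w h

lemma anc_allDirF : ∀ {a b : V} (w : Walk G a b), AllDirF w → Relation.ReflTransGen G.dir a b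
  | _, _, .nil _, _ => .refl
  | _, _, .cons s w, h => .head (s.isDirF_elim h.1).1 (anc_allDirF w h.2)

/-- From a collider-free continuation after a head, the walk is all forward
directed edges: it yields ancestry, and exits with a head. -/
lemma collTrue_spec : ∀ {a b : V} (w : Walk G a b), collInFrom ∅ true w →
    Relation.ReflTransGen G.dir a b ∧ exitHead true w = true
  | _, _, .nil _, _ => ⟨.refl, rfl⟩
  | _, _, .cons s w, hc => by
      obtain ⟨h1, h2⟩ := hc
      have hs : s.headStart = false := by
        cases hsv : s.headStart
        · rfl
        · exact absurd (h1 (by simp [hsv])) (Set.notMem_empty _)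
      obtain ⟨e, -, he⟩ := s.isDirF_elim (s.isDirF_of_headStart_false hs)
      rw [he] at h2
      obtain ⟨ha, hex⟩ := collTrue_spec w h2
      exact ⟨.head e ha, by rw [exitHead_cons, he]; exact hex⟩

lemma noColliders_snoc {a b c : V} (w : Walk G a b) (hnt : w.Nontrivial)
    (hnc : w.NoColliders) (s : Step G b c) (hj : ¬(w.lastHead && s.headStart) = true) :
    (w.append (.cons s (.nil c))).NoColliders := by
  cases w with
  | nil => exact hnt.elim
  | cons p w' =>
      rw [noColliders_cons] at hnc
      refine (collidersIn_cons_append ∅ p w' _).2 ⟨hnc, ?_⟩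
      have hl : (Walk.cons p w').lastHead = exitHead p.headEnd w' :=
        lastHead_eq_exitHead (Walk.cons p w') trivial p.headEnd
      rw [← hl]
      exact ⟨fun hh => (hj hh).elim, trivial⟩

/-- Reversal of a nontrivial collider-free walk. -/
lemma rev_aux : ∀ {x y : V} (w : Walk G x y), w.Nontrivial → w.NoColliders →
    ∃ r : Walk G y x, r.Nontrivial ∧ r.NoColliders ∧
      (∀ z ∈ r.interior, z ∈ w.interior) ∧
      r.firstHead = w.lastHead ∧ r.lastHead = w.firstHead
  | _, _, .cons s (.nil _), _, _ => by
      refine ⟨.cons s.symm (.nil _), trivial, trivial, ?_, ?_, ?_⟩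
      · simp [interior_cons, inner]
      · show s.symm.headStart = s.headEnd
        simp
      · show s.symm.headEnd = s.headStart
        simp
  | x, y, .cons s (.cons t w), _, hnc => by
      rw [noColliders_cons] at hnc
      have hj : ¬(s.headEnd && t.headStart) = true := fun hh => (hnc.1 hh).elim
      obtain ⟨r, hrnt, hrnc, hrint, hrf, hrl⟩ := rev_aux (.cons t w) trivial hnc.2
      refine ⟨r.append (.cons s.symm (.nil _)), nontrivial_append_left _ _ hrnt, ?_, ?_, ?_, ?_⟩
      · refine noColliders_snoc r hrnt hrnc s.symm ?_
        rw [hrl, Step.headStart_symm, firstHead_cons]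
        rw [Bool.and_comm] at hj
        exact hj
      · intro z hz
        rcases mem_interior_append r (.cons s.symm (.nil _)) z hz with hz | ⟨-, hz⟩ | hz
        · have := hrint z hz
          rw [interior_cons] at this
          rw [interior_cons]
          exact List.mem_cons_of_mem _ this
        · subst hz
          rw [interior_cons]
          exact List.mem_cons_self
        · rw [interior_cons] at hz
          simp [inner] at hz
      · cases r with
        | nil => exact hrnt.elim
        | cons p r' =>
            rw [cons_append, firstHead_cons]
            exact hrf
      · rw [lastHead_eq_exitHead _ (nontrivial_append_left _ _ hrnt) false,
          exitHead_append]
        show exitHead s.symm.headEnd _ = _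
        rw [exitHead_nil, Step.headEnd_symm]
        rfl

lemma ConnThrough.symm {M : Set V} {x y : V} {h1 h2 : Bool}
    (h : ConnThrough G M x y h1 h2) : ConnThrough G M y x h2 h1 := by
  obtain ⟨w, hnt, hnc, hM, hf, hl⟩ := h
  obtain ⟨r, hrnt, hrnc, hrint, hrf, hrl⟩ := rev_aux w hnt hnc
  exact ⟨r, hrnt, hrnc, fun z hz => hM z (hrint z hz), by rw [hrf, hl],
    by rw [hrl, hf]⟩

/-- A collider-free nontrivial walk cannot have tails at both ends. -/
lemma conn_not_ff {M : Set V} {x y : V} (h : ConnThrough G M x y false false) : False := by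
  obtain ⟨w, hnt, hnc, -, hf, hl⟩ := h
  cases w with
  | nil => exact hnt
  | cons s w =>
      rw [firstHead_cons] at hf
      obtain ⟨-, -, he⟩ := s.isDirF_elim (s.isDirF_of_headStart_false hf)
      rw [noColliders_cons, he] at hnc
      have := (collTrue_spec w hnc).2
      rw [lastHead_eq_exitHead _ hnt false, exitHead_cons, he, this] at hl
      exact Bool.true_eq_false.mp hl

/-- μ-connectedness in terms of `openFrom` and `exitHead`. -/
lemma muConn_iff {C : Set V} : ∀ {a b : V} (w : Walk G a b),
    w.MuConn C ↔ w.Nontrivial ∧ openFrom C (G.anSet C) false w ∧ exitHead false w = true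
  | _, _, .nil _ => by simp [MuConn, Nontrivial]
  | a, _, .cons s w => by
      show (a ∉ C ∧ _ ∧ _) ↔ _
      rw [lastHead_eq_exitHead (Walk.cons s w) trivial false]
      show _ ↔ (True ∧ (_ ∧ _) ∧ _)
      rw [if_neg (by simp : ¬(false && s.headStart) = true)]
      tauto

end Walk

open Walk

/-- The connectivity witness of an edge of the latent projection. -/
lemma connOfStep {O : Set V} {x y : {v : V // v ∈ O}} (P : Step (G.latentProj O) x y) :
    ConnThrough G Oᶜ x.1 y.1 P.headStart P.headEnd := by
  cases P with
  | dirF e => exact e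
  | dirB e => exact Walk.ConnThrough.symm e
  | bid e =>
      rcases e with e | e
      · exact e
      · exact Walk.ConnThrough.symm e

/-- An edge of the latent projection with the given endpoint marks, from a
connectivity witness. -/
lemma stepOfConn {O : Set V} {x u : V} (hx : x ∈ O) (hu : u ∈ O) {m₁ m₂ : Bool}
    (h : ConnThrough G Oᶜ x u m₁ m₂) :
    ∃ P : Step (G.latentProj O) ⟨x, hx⟩ ⟨u, hu⟩, P.headStart = m₁ ∧ P.headEnd = m₂ := by
  cases m₁ with
  | false =>
      cases m₂ with
      | false => exact absurd h Walk.conn_not_ff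
      | true => exact ⟨.dirF h, rfl, rfl⟩
  | true =>
      cases m₂ with
      | false => exact ⟨.dirB (Walk.ConnThrough.symm h), rfl, rfl⟩
      | true => exact ⟨.bid (Or.inl h), rfl, rfl⟩

/-- A tail-to-head collider-free connection yields ancestry in `G`. -/
lemma anc_of_conn {M : Set V} {x y : V} (e : ConnThrough G M x y false true) :
    G.anc x y := by
  obtain ⟨w, hnt, hnc, -, hf, -⟩ := e
  cases w with
  | nil => exact hnt.elim
  | cons s w =>
      rw [firstHead_cons] at hf
      obtain ⟨e', -, he⟩ := s.isDirF_elim (s.isDirF_of_headStart_false hf)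
      rw [noColliders_cons, he] at hnc
      exact .head e' (collTrue_spec w hnc).1

/-- A directed edge of the latent projection yields ancestry in `G`. -/
lemma anc_of_projDir {O : Set V} {x y : {v : V // v ∈ O}}
    (e : (G.latentProj O).dir x y) : G.anc x.1 y.1 :=
  anc_of_conn e

lemma anc_proj_to_G {O : Set V} {x y : {v : V // v ∈ O}}
    (h : (G.latentProj O).anc x y) : G.anc x.1 y.1 := by
  induction h with
  | refl => exact .refl
  | tail _ e ih => exact ih.trans (anc_of_projDir e)

/-- Accumulated directed segment through latent nodes. -/
def SegAcc (O : Set V) (x z : V) : Prop :=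
  ∃ w : Walk G x z, w.AllDirF ∧ (∀ u ∈ w.interior, u ∈ Oᶜ) ∧ (w.Nontrivial → z ∈ Oᶜ)

lemma segAcc_refl (O : Set V) (x : V) : SegAcc (G := G) O x x :=
  ⟨.nil x, trivial, fun u hu => absurd hu List.not_mem_nil, fun h => h.elim⟩

lemma anc_G_to_proj_aux (O : Set V) {z c : V} (hzc : Relation.ReflTransGen G.dir z c)
    (hc : c ∈ O) :
    ∀ (x : V) (hx : x ∈ O), SegAcc (G := G) O x z →
      Relation.ReflTransGen (G.latentProj O).dir ⟨x, hx⟩ ⟨c, hc⟩ := by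
  induction hzc using Relation.ReflTransGen.head_induction_on with
  | refl =>
      rintro x hx ⟨w, hAll, hint, hz⟩
      cases w with
      | nil => exact .refl
      | cons s w' => exact absurd hc (hz trivial)
  | @head z' u e rest ih =>
      rintro x hx ⟨w, hAll, hint, hz⟩
      have hAll' : (w.append (.cons (.dirF e) (.nil u))).AllDirF :=
        allDirF_append w _ hAll ⟨trivial, trivial⟩
      have hint' : ∀ v ∈ (w.append (.cons (.dirF e) (.nil u))).interior, v ∈ Oᶜ := by
        intro v hv
        rcases mem_interior_append w _ v hv with hv | ⟨hwnt, hv⟩ | hv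
        · exact hint v hv
        · subst hv
          exact hz hwnt
        · rw [interior_cons] at hv
          exact absurd hv List.not_mem_nil
      by_cases hu : u ∈ O
      · have hconn : ConnThrough G Oᶜ x u false true := by
          refine ⟨w.append (.cons (.dirF e) (.nil u)),
            nontrivial_append_right _ _ trivial, noColliders_allDirF _ hAll',
            hint', ?_, ?_⟩
          · exact firstHead_allDirF _ (nontrivial_append_right _ _ trivial) hAll'
          · exact lastHead_allDirF _ (nontrivial_append_right _ _ trivial) hAll'
        exact Relation.ReflTransGen.head (show (G.latentProj O).dir ⟨x, hx⟩ ⟨u, hu⟩ from hconn)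
          (ih u hu (segAcc_refl O u))
      · exact ih x hx ⟨w.append (.cons (.dirF e) (.nil u)), hAll', hint', fun _ => hu⟩

/-- The detour at a collider: go down a directed path to the first node of `C`
and come back. -/
lemma detour (C : Set V) {γ : V} (hγC : γ ∉ C) (hanc : γ ∈ G.anSet C) :
    ∃ d : Walk G γ γ, d.Nontrivial ∧
      (∀ h, Walk.openFrom C (G.anSet C) h d) ∧ (∀ h, Walk.exitHead h d = false) ∧
      (∀ h, Walk.collInFrom C h d) := by
  obtain ⟨c, hcC, hgc⟩ := hanc
  revert hγC
  induction hgc using Relation.ReflTransGen.head_induction_on with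
  | refl => exact fun hγC => absurd hcC hγC
  | @head γ' u e rest ih =>
      intro hγC
      by_cases hu : u ∈ C
      · refine ⟨.cons (.dirF e) (.cons (.dirB e) (.nil γ')), trivial, ?_, fun h => rfl, ?_⟩
        · intro h
          refine ⟨?_, ?_, trivial⟩
          · rw [if_neg (by simp [Step.headStart])]
            exact hγC
          · rw [if_pos (by simp [Step.headStart, Step.headEnd])]
            exact ⟨u, hu, .refl⟩
        · intro h
          exact ⟨fun hh => by simp [Step.headStart] at hh, fun _ => hu, trivial⟩
      · obtain ⟨d, hdnt, hdo, hdex, hdcl⟩ := ih hu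
        refine ⟨.cons (.dirF e) (d.append (.cons (.dirB e) (.nil γ'))), trivial, ?_, ?_, ?_⟩
        · intro h
          refine ⟨?_, ?_⟩
          · rw [if_neg (by simp [Step.headStart])]
            exact hγC
          · rw [show (Step.dirF e : Step G γ' u).headEnd = true from rfl,
              openFrom_append, hdex true]
            exact ⟨hdo true, ⟨by rw [if_neg (by simp [Step.headStart])]; exact hu, trivial⟩⟩
        · intro h
          rw [exitHead_cons, exitHead_append, exitHead_cons, exitHead_nil]
          rfl
        · intro h
          refine ⟨fun hh => by simp [Step.headStart] at hh, ?_⟩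
          rw [show (Step.dirF e : Step G γ' u).headEnd = true from rfl,
            collInFrom_append, hdex true]
          exact ⟨hdcl true, fun hh => by simp [Step.headStart] at hh, trivial⟩

/-- Rerouting: any open walk can be modified (inserting detours at colliders
outside `C`) so that all colliders lie in `C`. -/
lemma reroute (C : Set V) : ∀ {a b : V} (w : Walk G a b) (h : Bool),
    Walk.openFrom C (G.anSet C) h w →
    ∃ w₂ : Walk G a b, (w.Nontrivial → w₂.Nontrivial) ∧
      Walk.openFrom C (G.anSet C) h w₂ ∧ Walk.collInFrom C h w₂ ∧
      Walk.exitHead h w₂ = Walk.exitHead h w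
  | _, _, .nil _, h, _ => ⟨.nil _, fun f => f, trivial, trivial, rfl⟩
  | a, b, .cons s w, h, ho => by
      obtain ⟨h1, h2⟩ := ho
      obtain ⟨w₂, hnt, ho₂, hcl₂, hex₂⟩ := reroute C w s.headEnd h2
      by_cases hcol : (h && s.headStart) = true
      · have hAnc : a ∈ G.anSet C := by rwa [if_pos hcol] at h1
        by_cases haC : a ∈ C
        · exact ⟨.cons s w₂, fun _ => trivial, ⟨h1, ho₂⟩, ⟨fun _ => haC, hcl₂⟩,
            by rw [exitHead_cons, exitHead_cons, hex₂]⟩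
        · obtain ⟨d, hdnt, hdo, hdex, hdcl⟩ := detour C haC hAnc
          refine ⟨d.append (.cons s w₂), fun _ => nontrivial_append_left _ _ hdnt,
            ?_, ?_, ?_⟩
          · rw [openFrom_append, hdex h]
            exact ⟨hdo h, ⟨by rw [if_neg (by simp)]; exact haC, ho₂⟩⟩
          · rw [collInFrom_append, hdex h]
            exact ⟨hdcl h, fun hh => by simp at hh, hcl₂⟩
          · rw [exitHead_append, hdex h, exitHead_cons, exitHead_cons, hex₂]
      · exact ⟨.cons s w₂, fun _ => trivial, ⟨h1, ho₂⟩, ⟨fun hc => absurd hc hcol, hcl₂⟩,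
          by rw [exitHead_cons, exitHead_cons, hex₂]⟩

lemma anSet_proj_to_G {O C : Set V} {x : {v : V // v ∈ O}}
    (hx : x ∈ (G.latentProj O).anSet (Subtype.val ⁻¹' C)) : x.1 ∈ G.anSet C :=
  let ⟨c, hc, h⟩ := hx
  ⟨c.1, hc, anc_proj_to_G h⟩

lemma anSet_G_to_proj {O C : Set V} (hC : C ⊆ O) {x : V} (hx : x ∈ O)
    (h : x ∈ G.anSet C) :
    (⟨x, hx⟩ : {v : V // v ∈ O}) ∈ (G.latentProj O).anSet (Subtype.val ⁻¹' C) :=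
  let ⟨c, hc, hanc⟩ := h
  ⟨⟨c, hC hc⟩, hc, anc_G_to_proj_aux O hanc (hC hc) x hx (segAcc_refl O x)⟩

lemma firstHead_append_left : ∀ {a b c : V} (w₁ : Walk G a b) (w₂ : Walk G b c),
    w₁.Nontrivial → (w₁.append w₂).firstHead = w₁.firstHead
  | _, _, _, .cons _ _, _, _ => rfl

/-- Expansion: an open walk in the latent projection expands to an open walk
in `G`. -/
lemma expand_aux {O : Set V} (C : Set V) (hC : C ⊆ O) :
    ∀ {x y : {v : V // v ∈ O}} (W : Walk (G.latentProj O) x y) (h : Bool),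
    W.Nontrivial →
    Walk.openFrom (Subtype.val ⁻¹' C) ((G.latentProj O).anSet (Subtype.val ⁻¹' C)) h W →
    ∃ w : Walk G x.1 y.1, w.Nontrivial ∧ Walk.openFrom C (G.anSet C) h w ∧
      Walk.exitHead h w = Walk.exitHead h W
  | _, _, .nil _, _, hnt, _ => hnt.elim
  | x, y, .cons S W', h, _, ho => by
      obtain ⟨h1, h2⟩ := ho
      obtain ⟨seg, snt, snc, sM, sf, sl⟩ := connOfStep S
      have hsegint : ∀ z ∈ seg.interior, z ∉ C := fun z hz hzc => (sM z hz) (hC hzc)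
      have hcond : if h && S.headStart then x.1 ∈ G.anSet C else x.1 ∉ C := by
        by_cases hb : (h && S.headStart) = true
        · rw [if_pos hb]
          rw [if_pos hb] at h1
          exact anSet_proj_to_G h1
        · rw [if_neg hb]
          rw [if_neg hb] at h1
          exact h1
      have hsego : Walk.openFrom C (G.anSet C) h seg :=
        openFrom_seg C _ seg h snc hsegint (by rw [sf]; exact hcond)
      have hsegex : Walk.exitHead h seg = S.headEnd := by
        rw [← lastHead_eq_exitHead seg snt h, sl]
      cases W' with
      | nil =>
          exact ⟨seg, snt, hsego, by rw [hsegex]; rfl⟩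
      | cons T W'' =>
          obtain ⟨w', wnt', ho', hex'⟩ :=
            expand_aux C hC (.cons T W'') S.headEnd trivial h2
          refine ⟨seg.append w', nontrivial_append_left _ _ snt, ?_, ?_⟩
          · rw [openFrom_append, hsegex]
            exact ⟨hsego, ho'⟩
          · rw [exitHead_append, hsegex, hex']
            rfl

/-- A pending segment of a walk in `G`, to be contracted into a single edge of
the latent projection. -/
def PendSeg (O C : Set V) (hE hin : Bool) (x z : V) : Prop :=
  ∃ seg : Walk G x z, seg.Nontrivial ∧ z ∈ Oᶜ ∧ (∀ u ∈ seg.interior, u ∈ Oᶜ) ∧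
    seg.NoColliders ∧ Walk.exitHead hE seg = hin ∧
    (if hE && seg.firstHead then x ∈ G.anSet C else x ∉ C)

/-- Contraction: an open walk in `G` whose colliders all lie in `C ⊆ O`
contracts to an open walk in the latent projection. -/
lemma contract_aux {O : Set V} (C : Set V) (hC : C ⊆ O) :
    ∀ {z y : V} (w : Walk G z y) (hy : y ∈ O) (hin : Bool),
      Walk.openFrom C (G.anSet C) hin w → Walk.collInFrom C hin w →
      ∀ (x : V) (hx : x ∈ O) (hE : Bool),
      ((x = z ∧ hE = hin) ∨ PendSeg (G := G) O C hE hin x z) →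
      ∃ W : Walk (G.latentProj O) ⟨x, hx⟩ ⟨y, hy⟩,
        Walk.openFrom (Subtype.val ⁻¹' C)
          ((G.latentProj O).anSet (Subtype.val ⁻¹' C)) hE W ∧
        Walk.exitHead hE W = Walk.exitHead hin w ∧
        ((w.Nontrivial ∨ PendSeg (G := G) O C hE hin x z) → W.Nontrivial)
  | _, _, .nil _, hy, hin, _, _, x, hx, hE, hinv => by
      rcases hinv with ⟨hxz, hEin⟩ | ⟨seg, -, hzO, -⟩
      · subst hxz
        subst hEin
        refine ⟨.nil _, trivial, rfl, ?_⟩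
        rintro (hcon | ⟨-, -, hzO, -⟩)
        · exact hcon.elim
        · exact absurd hy hzO
      · exact absurd hy hzO
  | _, _, @Walk.cons _ _ z u _ s w', hy, hin, ho, hcl, x, hx, hE, hinv => by
      obtain ⟨ho1, ho2⟩ := ho
      obtain ⟨hc1, hc2⟩ := hcl
      have hSS : ∃ SS : Walk G x u, SS.Nontrivial ∧ (∀ v ∈ SS.interior, v ∈ Oᶜ) ∧
          SS.NoColliders ∧ Walk.exitHead hE SS = s.headEnd ∧
          (if hE && SS.firstHead then x ∈ G.anSet C else x ∉ C) := by
        rcases hinv with ⟨hxz, hEin⟩ | ⟨seg, snt, szO, sint, snc, sex, scond⟩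
        · subst hxz
          subst hEin
          refine ⟨.cons s (.nil _), trivial, ?_, trivial, rfl, ?_⟩
          · intro v hv
            rw [interior_cons] at hv
            exact absurd hv List.not_mem_nil
          · exact ho1
        · have hzC : z ∉ C := fun hzC => szO (hC hzC)
          have hjunc : ¬(hin && s.headStart) = true := fun hh => hzC (hc1 hh)
          refine ⟨seg.append (.cons s (.nil _)), nontrivial_append_left _ _ snt,
            ?_, ?_, ?_, ?_⟩
          · intro v hv
            rcases mem_interior_append seg _ v hv with hv | ⟨-, hv⟩ | hv
            · exact sint v hv
            · subst hv
              exact szO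
            · rw [interior_cons] at hv
              exact absurd hv List.not_mem_nil
          · refine noColliders_snoc seg snt snc s ?_
            rw [lastHead_eq_exitHead seg snt hE, sex]
            exact hjunc
          · rw [exitHead_append, sex]
            rfl
          · rw [firstHead_append_left _ _ snt]
            exact scond
      obtain ⟨SS, ssnt, ssint, ssnc, ssex, sscond⟩ := hSS
      by_cases hu : u ∈ O
      · have hconn : ConnThrough G Oᶜ x u SS.firstHead s.headEnd :=
          ⟨SS, ssnt, ssnc, ssint, rfl, by rw [lastHead_eq_exitHead SS ssnt hE, ssex]⟩
        obtain ⟨P, hPs, hPe⟩ := stepOfConn hx hu hconn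
        obtain ⟨W', hoW', hexW', -⟩ :=
          contract_aux C hC w' hy s.headEnd ho2 hc2 u hu s.headEnd (Or.inl ⟨rfl, rfl⟩)
        refine ⟨.cons P W', ⟨?_, ?_⟩, ?_, fun _ => trivial⟩
        · rw [hPs]
          by_cases hb : (hE && SS.firstHead) = true
          · rw [if_pos hb]
            rw [if_pos hb] at sscond
            exact anSet_G_to_proj hC hx sscond
          · rw [if_neg hb]
            rw [if_neg hb] at sscond
            exact sscond
        · rw [hPe]
          exact hoW'
        · rw [exitHead_cons, exitHead_cons, hPe, hexW']
      · have pend : PendSeg (G := G) O C hE s.headEnd x u :=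
          ⟨SS, ssnt, hu, ssint, ssnc, ssex, sscond⟩
        obtain ⟨W, hoW, hexW, hntW⟩ :=
          contract_aux C hC w' hy s.headEnd ho2 hc2 x hx hE (Or.inr pend)
        exact ⟨W, hoW, by rw [exitHead_cons, hexW],
          fun _ => hntW (Or.inr pend)⟩

end DMG

/-- Theorem 1: for `A, B, C ⊆ O`, `B` is μ-separated from
`A` given `C` in `G` iff `B` is μ-separated from `A` given `C` in the latent
projection `m(G, O)`. -/
theorem stmt6 {V : Type u} [Fintype V] (G : DMG V) (O : Set V) (A B C : Set V)
    (hA : A ⊆ O) (hB : B ⊆ O) (hC : C ⊆ O) :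
    DMG.muSep G A B C ↔
      DMG.muSep (G.latentProj O)
        (Subtype.val ⁻¹' A) (Subtype.val ⁻¹' B) (Subtype.val ⁻¹' C) := by
  constructor
  · intro hsep a' b' ha hb W hW
    rw [DMG.Walk.muConn_iff] at hW
    obtain ⟨hnt, ho, hex⟩ := hW
    obtain ⟨w, wnt, hwo, hwex⟩ := DMG.expand_aux C hC W false hnt ho
    refine hsep ha hb w ?_
    rw [DMG.Walk.muConn_iff]
    exact ⟨wnt, hwo, by rw [hwex, hex]⟩
  · intro hsep a b ha hb w hw
    rw [DMG.Walk.muConn_iff] at hw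
    obtain ⟨hnt, ho, hex⟩ := hw
    obtain ⟨w₂, hnt₂, ho₂, hcl₂, hex₂⟩ := DMG.reroute C w false ho
    obtain ⟨W, hoW, hexW, hntW⟩ :=
      DMG.contract_aux C hC w₂ (hB hb) false ho₂ hcl₂ a (hA ha) false (Or.inl ⟨rfl, rfl⟩)
    refine hsep (show (⟨a, hA ha⟩ : {v : V // v ∈ O}) ∈ Subtype.val ⁻¹' A from ha)
      (show (⟨b, hB hb⟩ : {v : V // v ∈ O}) ∈ Subtype.val ⁻¹' B from hb) W ?_
    rw [DMG.Walk.muConn_iff]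
    exact ⟨hntW (Or.inl (hnt₂ hnt)), hoW, by rw [hexW, hex₂, hex]⟩
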